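/- arXiv:2410.16017 — 2 statements merged into one kernel-verified Lean document; each statement's English description precedes it below -/
import Mathlib

section
/- Let (Ω,𝒜,P) and (Θ,𝒯,Π̄) be probability spaces, let R : Θ × Ω → ℝ be jointly measurable and square-integrable with respect to the product measure Π̄ ⊗ P, and let v > 0. Suppose that for Π̄-almost every θ: ∫_Ω R(θ,ω) dP(ω) ≥ −v and Var_P(R(θ,·)) ≤ v. Then for every C > 0: P( { ω : ∫_Θ exp(R(θ,ω)) dΠ̄(θ) ≤ exp(−(1+C)v) } ) ≤ 1/(C²·v). -/
open MeasureTheory ProbabilityTheory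

private lemma sq_integral_le_aux {α : Type*} [MeasurableSpace α] (μ : Measure α)
    [IsProbabilityMeasure μ] {f : α → ℝ} (hf : MemLp f 2 μ) :
    (∫ x, f x ∂μ) ^ 2 ≤ ∫ x, f x ^ 2 ∂μ := by
  have h1 := variance_nonneg f μ
  rw [variance_eq_sub hf] at h1
  have h2 : μ[f ^ 2] = ∫ x, f x ^ 2 ∂μ := by simp [Pi.pow_apply]
  linarith

private lemma ofReal_max_zero (x : ℝ) :
    ENNReal.ofReal (max x 0) = ENNReal.ofReal x := by
  rcases le_total x 0 with h | h
  · simp [max_eq_right h, ENNReal.ofReal_of_nonpos h]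
  · simp [max_eq_left h]

theorem stmt_4 {Ω Θ : Type*} [MeasurableSpace Ω] [MeasurableSpace Θ]
    (P : Measure Ω) [IsProbabilityMeasure P]
    (Pri : Measure Θ) [IsProbabilityMeasure Pri]
    (R : Θ × Ω → ℝ) (hRmeas : Measurable R)
    (hR2 : MemLp R 2 (Pri.prod P))
    (v : ℝ) (hv : 0 < v)
    (hmean : ∀ᵐ θ ∂Pri, -v ≤ ∫ ω, R (θ, ω) ∂P)
    (hvar : ∀ᵐ θ ∂Pri, variance (fun ω => R (θ, ω)) P ≤ v) :
    ∀ C : ℝ, 0 < C →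
      P {ω | ∫⁻ θ, ENNReal.ofReal (Real.exp (R (θ, ω))) ∂Pri
            ≤ ENNReal.ofReal (Real.exp (-(1 + C) * v))}
        ≤ ENNReal.ofReal (1 / (C ^ 2 * v)) := by
  intro C hC
  -- basic integrabilities
  have hRint : Integrable R (Pri.prod P) := hR2.integrable one_le_two
  have hRsq : Integrable (fun p => R p ^ 2) (Pri.prod P) := hR2.integrable_sq
  have hswap : Integrable (fun q : Ω × Θ => R (q.2, q.1)) (P.prod Pri) := hRint.swap
  have hsqswap : Integrable (fun q : Ω × Θ => R (q.2, q.1) ^ 2) (P.prod Pri) := hRsq.swap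
  set Z : Ω → ℝ := fun ω => ∫ θ, R (θ, ω) ∂Pri with hZdef
  set mθ : Θ → ℝ := fun θ => ∫ ω, R (θ, ω) ∂P with hmθdef
  set m : ℝ := ∫ θ, mθ θ ∂Pri with hmdef
  have hmθint : Integrable mθ Pri := hRint.integral_prod_left
  have hZint : Integrable Z P := hswap.integral_prod_left
  have hZm : ∫ ω, Z ω ∂P = m := by
    rw [hmdef]
    exact (integral_integral_swap (f := fun θ ω => R (θ, ω)) hRint).symm
  have hm_ge : -v ≤ m := by
    have : ∫ (_ : Θ), (-v) ∂Pri ≤ ∫ θ, mθ θ ∂Pri :=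
      integral_mono_ae (integrable_const _) hmθint hmean
    simpa using this
  -- sections in ω (a.e. θ)
  have hsecθR : ∀ᵐ θ ∂Pri, Integrable (fun ω => R (θ, ω)) P := hRint.prod_right_ae
  have hsecθR2 : ∀ᵐ θ ∂Pri, Integrable (fun ω => R (θ, ω) ^ 2) P := hRsq.prod_right_ae
  have hsecθMem : ∀ᵐ θ ∂Pri, MemLp (fun ω => R (θ, ω)) 2 P := by
    filter_upwards [hsecθR, hsecθR2] with θ h1 h2
    exact (memLp_two_iff_integrable_sq h1.aestronglyMeasurable).2 h2
  -- mθ is in L²(Pri)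
  have hmθsm : StronglyMeasurable mθ := hRmeas.stronglyMeasurable.integral_prod_right'
  have hmθ2 : MemLp mθ 2 Pri := by
    refine (memLp_two_iff_integrable_sq hmθsm.aestronglyMeasurable).2 ?_
    have hW : Integrable (fun θ => ∫ ω, R (θ, ω) ^ 2 ∂P) Pri := hRsq.integral_prod_left
    refine hW.mono' ((hmθsm.pow 2).aestronglyMeasurable) ?_
    filter_upwards [hsecθMem] with θ hθ
    rw [Real.norm_eq_abs, abs_of_nonneg (sq_nonneg _)]
    exact sq_integral_le_aux P hθ
  -- centered function S
  set S : Θ × Ω → ℝ := fun p => R p - mθ p.1 with hSdef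
  have hfstmap : (Pri.prod P).map Prod.fst = Pri := by
    rw [Measure.map_fst_prod]; simp
  have hmθfst : MemLp (fun p : Θ × Ω => mθ p.1) 2 (Pri.prod P) := by
    have h2 : MemLp mθ 2 ((Pri.prod P).map Prod.fst) := by rw [hfstmap]; exact hmθ2
    exact h2.comp_of_map measurable_fst.aemeasurable
  have hS2 : MemLp S 2 (Pri.prod P) := hR2.sub hmθfst
  have hSint : Integrable S (Pri.prod P) := hS2.integrable one_le_two
  have hSsq : Integrable (fun p => S p ^ 2) (Pri.prod P) := hS2.integrable_sq
  -- sections of S in θ (a.e. ω)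
  have hsecωS : ∀ᵐ ω ∂P, Integrable (fun θ => S (θ, ω)) Pri := hSint.swap.prod_right_ae
  have hsecωS2 : ∀ᵐ ω ∂P, Integrable (fun θ => S (θ, ω) ^ 2) Pri := hSsq.swap.prod_right_ae
  have hsecωR : ∀ᵐ ω ∂P, Integrable (fun θ => R (θ, ω)) Pri := hswap.prod_right_ae
  -- key pointwise (a.e.) Jensen bound and identification
  have hZsub : ∀ᵐ ω ∂P, Z ω - m = ∫ θ, S (θ, ω) ∂Pri := by
    filter_upwards [hsecωR] with ω h1
    rw [hZdef, hmdef]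
    simp only [hSdef]
    rw [integral_sub h1 hmθint]
  have hjensen : ∀ᵐ ω ∂P, (Z ω - m) ^ 2 ≤ ∫ θ, S (θ, ω) ^ 2 ∂Pri := by
    filter_upwards [hZsub, hsecωS, hsecωS2] with ω h0 h1 h2
    rw [h0]
    exact sq_integral_le_aux Pri ((memLp_two_iff_integrable_sq h1.aestronglyMeasurable).2 h2)
  -- Z is in L²(P)
  have hZsm : StronglyMeasurable Z := hRmeas.stronglyMeasurable.integral_prod_left'
  have hWint : Integrable (fun ω => ∫ θ, S (θ, ω) ^ 2 ∂Pri) P := hSsq.swap.integral_prod_left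
  have hY2 : MemLp (fun ω => Z ω - m) 2 P := by
    refine (memLp_two_iff_integrable_sq
      ((hZsm.sub stronglyMeasurable_const).aestronglyMeasurable)).2 ?_
    refine hWint.mono' (((hZsm.sub stronglyMeasurable_const).pow 2).aestronglyMeasurable) ?_
    filter_upwards [hjensen] with ω hω
    rw [Real.norm_eq_abs, abs_of_nonneg (sq_nonneg _)]
    exact hω
  have hZ2 : MemLp Z 2 P := by
    have h := hY2.add (memLp_const m)
    apply h.ae_eq
    filter_upwards with ω
    simp
  -- variance bound
  have hvarZ : variance Z P ≤ v := by
    have hveq : variance Z P = ∫ ω, (Z ω - m) ^ 2 ∂P := by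
      rw [variance_eq_integral hZ2.aestronglyMeasurable.aemeasurable]
      simp only [Pi.pow_apply, Pi.sub_apply, hZm]
    have hYsqint : Integrable (fun ω => (Z ω - m) ^ 2) P := hY2.integrable_sq
    have step1 : ∫ ω, (Z ω - m) ^ 2 ∂P ≤ ∫ ω, (∫ θ, S (θ, ω) ^ 2 ∂Pri) ∂P :=
      integral_mono_ae hYsqint hWint hjensen
    have step2 : ∫ ω, (∫ θ, S (θ, ω) ^ 2 ∂Pri) ∂P = ∫ θ, ∫ ω, S (θ, ω) ^ 2 ∂P ∂Pri := by
      rw [← integral_prod _ hSsq, ← integral_prod_symm _ hSsq]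
    have step3 : ∫ θ, ∫ ω, S (θ, ω) ^ 2 ∂P ∂Pri ≤ ∫ (_ : Θ), v ∂Pri := by
      refine integral_mono_ae hSsq.integral_prod_left (integrable_const _) ?_
      filter_upwards [hvar, hsecθMem] with θ h1 h2
      have : variance (fun ω => R (θ, ω)) P = ∫ ω, S (θ, ω) ^ 2 ∂P := by
        rw [variance_eq_integral h2.aestronglyMeasurable.aemeasurable]
      linarith
    have step4 : ∫ (_ : Θ), v ∂Pri = v := by simp
    linarith
  -- event inclusion
  have hincl : ∀ᵐ ω ∂P, ω ∈ {ω | ∫⁻ θ, ENNReal.ofReal (Real.exp (R (θ, ω))) ∂Pri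
      ≤ ENNReal.ofReal (Real.exp (-(1 + C) * v))} →
      ω ∈ {ω | C * v ≤ |Z ω - ∫ x, Z x ∂P|} := by
    filter_upwards [hsecωR] with ω h1 hmem
    show C * v ≤ |Z ω - ∫ x, Z x ∂P|
    replace hmem : ∫⁻ θ, ENNReal.ofReal (Real.exp (R (θ, ω))) ∂Pri
        ≤ ENNReal.ofReal (Real.exp (-(1 + C) * v)) := hmem
    -- tangent-line Jensen: ofReal (exp (Z ω)) ≤ ∫⁻ ofReal (exp (R (θ, ω)))
    set g : Θ → ℝ := fun θ => Real.exp (Z ω) * ((1 - Z ω) + R (θ, ω)) with hgdef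
    have hg_int : Integrable g Pri := (((integrable_const (1 - Z ω)).add h1).const_mul _)
    have hg_int_max : Integrable (fun θ => max (g θ) 0) Pri := hg_int.pos_part
    have hg_eq : ∫ θ, g θ ∂Pri = Real.exp (Z ω) := by
      rw [hgdef]
      simp only [integral_const_mul]
      rw [integral_add (integrable_const _) h1]
      simp only [integral_const, measure_univ, probReal_univ, ENNReal.toReal_one, smul_eq_mul, one_mul]
      ring
    have hg_le : ∀ θ, g θ ≤ Real.exp (R (θ, ω)) := by
      intro θ
      have h := Real.add_one_le_exp (R (θ, ω) - Z ω)
      have h2 := mul_le_mul_of_nonneg_left h (Real.exp_nonneg (Z ω))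
      rw [← Real.exp_add] at h2
      calc g θ = Real.exp (Z ω) * (R (θ, ω) - Z ω + 1) := by rw [hgdef]; ring_nf
        _ ≤ Real.exp (Z ω + (R (θ, ω) - Z ω)) := h2
        _ = Real.exp (R (θ, ω)) := by ring_nf
    have key : ENNReal.ofReal (Real.exp (Z ω)) ≤
        ∫⁻ θ, ENNReal.ofReal (Real.exp (R (θ, ω))) ∂Pri := by
      calc ENNReal.ofReal (Real.exp (Z ω)) = ENNReal.ofReal (∫ θ, g θ ∂Pri) := by rw [hg_eq]
        _ ≤ ENNReal.ofReal (∫ θ, max (g θ) 0 ∂Pri) := by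
            exact ENNReal.ofReal_le_ofReal
              (integral_mono hg_int hg_int_max fun θ => le_max_left _ _)
        _ = ∫⁻ θ, ENNReal.ofReal (max (g θ) 0) ∂Pri :=
            ofReal_integral_eq_lintegral_ofReal hg_int_max
              (Filter.Eventually.of_forall fun θ => le_max_right _ _)
        _ = ∫⁻ θ, ENNReal.ofReal (g θ) ∂Pri := by
            simp_rw [ofReal_max_zero]
        _ ≤ ∫⁻ θ, ENNReal.ofReal (Real.exp (R (θ, ω))) ∂Pri :=
            lintegral_mono fun θ => ENNReal.ofReal_le_ofReal (hg_le θ)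
    have hZle : Z ω ≤ -(1 + C) * v := by
      have h3 : ENNReal.ofReal (Real.exp (Z ω)) ≤ ENNReal.ofReal (Real.exp (-(1 + C) * v)) :=
        key.trans hmem
      have h4 : Real.exp (Z ω) ≤ Real.exp (-(1 + C) * v) :=
        (ENNReal.ofReal_le_ofReal_iff (Real.exp_nonneg _)).1 h3
      exact (Real.exp_le_exp).1 h4
    rw [hZm]
    refine le_abs.2 (Or.inr ?_)
    have : -(1 + C) * v = -v - C * v := by ring
    rw [this] at hZle
    linarith
  -- conclude via Chebyshev
  have hCv : 0 < C * v := mul_pos hC hv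
  calc P {ω | ∫⁻ θ, ENNReal.ofReal (Real.exp (R (θ, ω))) ∂Pri
        ≤ ENNReal.ofReal (Real.exp (-(1 + C) * v))}
      ≤ P {ω | C * v ≤ |Z ω - ∫ x, Z x ∂P|} := measure_mono_ae hincl
    _ ≤ ENNReal.ofReal (variance Z P / (C * v) ^ 2) :=
        meas_ge_le_variance_div_sq hZ2 hCv
    _ ≤ ENNReal.ofReal (1 / (C ^ 2 * v)) := by
        apply ENNReal.ofReal_le_ofReal
        rw [div_le_div_iff₀ (by positivity) (by positivity)]
        have : variance Z P ≤ v := hvarZ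
        nlinarith [sq_nonneg C, sq_nonneg v]
end

section
/- Let γ₀, γ₁, γ₂ ∈ ℝ with γ₁ ≠ −1 and γ₂ ≠ 1, let y > 0, and let p : ℝ → ℝ be differentiable with p(s) > 0 for all s ∈ ℝ. Define A(t) = exp(γ₀)·((1−γ₂)/(1+γ₁))·( p(t)^{1+γ₁} − p(1)^{1+γ₁} ) + y^{1−γ₂} and S(t) = y − A(t)^{1/(1−γ₂)}, where x^r denotes the real power of a positive real x. Then S(1) = 0, and at every t ∈ ℝ with A(t) > 0, S is differentiable at t with derivative S'(t) = −exp(γ₀) · p(t)^{γ₁} · (y − S(t))^{γ₂} · p'(t). -/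
theorem stmt_13 (γ₀ γ₁ γ₂ : ℝ) (h₁ : γ₁ ≠ -1) (h₂ : γ₂ ≠ 1)
    (y : ℝ) (hy : 0 < y)
    (p : ℝ → ℝ) (hp : Differentiable ℝ p) (hppos : ∀ s, 0 < p s)
    (A S : ℝ → ℝ)
    (hA : ∀ t, A t = Real.exp γ₀ * ((1 - γ₂) / (1 + γ₁)) * (p t ^ (1 + γ₁) - p 1 ^ (1 + γ₁))
        + y ^ (1 - γ₂))
    (hS : ∀ t, S t = y - A t ^ (1 / (1 - γ₂))) :
    S 1 = 0 ∧ ∀ t : ℝ, 0 < A t →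
      HasDerivAt S (-Real.exp γ₀ * p t ^ γ₁ * (y - S t) ^ γ₂ * deriv p t) t := by
  have h1 : (1:ℝ) + γ₁ ≠ 0 := fun h => h₁ (by linarith)
  have h2 : (1:ℝ) - γ₂ ≠ 0 := sub_ne_zero.mpr (Ne.symm h₂)
  have hAe : A = fun t => Real.exp γ₀ * ((1 - γ₂) / (1 + γ₁)) *
      (p t ^ (1 + γ₁) - p 1 ^ (1 + γ₁)) + y ^ (1 - γ₂) := funext hA
  subst hAe
  have hSe : S = fun t => y -
      (Real.exp γ₀ * ((1 - γ₂) / (1 + γ₁)) * (p t ^ (1 + γ₁) - p 1 ^ (1 + γ₁)) + y ^ (1 - γ₂))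
        ^ (1 / (1 - γ₂)) := funext hS
  subst hSe
  constructor
  · simp only [sub_self, mul_zero, zero_add]
    rw [← Real.rpow_mul hy.le, mul_one_div, div_self h2, Real.rpow_one, sub_self]
  · intro t hAt
    simp only at hAt
    have hpt := hppos t
    have hrp : HasDerivAt (fun s => p s ^ (1 + γ₁))
        (deriv p t * (1 + γ₁) * p t ^ (1 + γ₁ - 1)) t :=
      (hp t).hasDerivAt.rpow_const (Or.inl hpt.ne')
    have hA1 : HasDerivAt (fun s => Real.exp γ₀ * ((1 - γ₂) / (1 + γ₁)) *
        (p s ^ (1 + γ₁) - p 1 ^ (1 + γ₁)) + y ^ (1 - γ₂))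
        (Real.exp γ₀ * ((1 - γ₂) / (1 + γ₁)) * (deriv p t * (1 + γ₁) * p t ^ (1 + γ₁ - 1))) t :=
      ((hrp.sub_const _).const_mul _).add_const _
    have hS1 := (hA1.rpow_const (p := 1 / (1 - γ₂)) (Or.inl hAt.ne')).const_sub y
    refine hS1.congr_deriv ?_
    symm
    beta_reduce
    set At : ℝ := Real.exp γ₀ * ((1 - γ₂) / (1 + γ₁)) *
        (p t ^ (1 + γ₁) - p 1 ^ (1 + γ₁)) + y ^ (1 - γ₂) with hAtdef
    have e1 : (1:ℝ) + γ₁ - 1 = γ₁ := by ring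
    have e2 : (1:ℝ) / (1 - γ₂) - 1 = (1 / (1 - γ₂)) * γ₂ := by field_simp; ring
    have e3 : y - (y - At ^ (1 / (1 - γ₂))) = At ^ (1 / (1 - γ₂)) := by ring
    rw [e3, ← Real.rpow_mul hAt.le, e1, e2]
    field_simp
end
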